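/- For z ∈ {−1,1}^n and i ∈ {1,…,n} define m_{i,z} = 2^{−n} ∫₀¹ z_i · ∏_{k≠i} (1 + ρ z_k) dρ. Then ∑_{z∈{−1,1}^n} max_{1≤i≤n} |m_{i,z}| = log n + O(1); that is, there exists a constant C > 0 such that for all n ≥ 2, | ∑_{z∈{−1,1}^n} max_{1≤i≤n} |m_{i,z}| − log n | ≤ C. In particular, the norm of the operator f ↦ ∫₀^∞ ∇P_t f dt from L¹ of the Hamming cube to L¹ with values in ℓ^∞_n grows like log n. -/

import Mathlib

/-- The coordinate value `z_i = ±1` of a Boolean-encoded point of the Hamming cube. -/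
def chi (b : Bool) : ℝ := if b then 1 else -1

/-- The matrix element `m_{i,z} = 2^{−n} ∫₀¹ z_i ∏_{k≠i}(1 + ρ z_k) dρ` of the
convolution kernel of the operator `f ↦ ∫₀^∞ ∇ e^{tΔ} f dt` on the Hamming cube,
evaluated at the all-ones vertex. -/
noncomputable def mel (n : ℕ) (i : Fin n) (z : Fin n → Bool) : ℝ :=
  (2 : ℝ) ^ (-(n : ℤ)) *
    ∫ ρ in (0 : ℝ)..1, chi (z i) * ∏ k ∈ Finset.univ.erase i, (1 + ρ * chi (z k))


section Aux
open Finset intervalIntegral MeasureTheory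

noncomputable def II (a b : ℕ) : ℝ := ∫ ρ in (0:ℝ)..1, (1+ρ)^a * (1-ρ)^b

lemma II_cont (a b : ℕ) : Continuous fun ρ : ℝ => (1+ρ)^a * (1-ρ)^b := by fun_prop

lemma II_nonneg (a b : ℕ) : 0 ≤ II a b := by
  apply intervalIntegral.integral_nonneg (by norm_num)
  intro u hu
  simp only [Set.mem_Icc] at hu
  have h1 : (0:ℝ) ≤ 1 + u := by linarith [hu.1]
  have h2 : (0:ℝ) ≤ 1 - u := by linarith [hu.2]
  positivity

lemma II_mono {a b a' b' : ℕ} (h : a ≤ a') (hs : a + b = a' + b') : II a b ≤ II a' b' := by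
  apply intervalIntegral.integral_mono_on (by norm_num)
    ((II_cont a b).intervalIntegrable 0 1) ((II_cont a' b').intervalIntegrable 0 1)
  intro u hu
  simp only [Set.mem_Icc] at hu
  have h1 : (0:ℝ) ≤ 1 + u := by linarith [hu.1]
  have h2 : (0:ℝ) ≤ 1 - u := by linarith [hu.2]
  have h12 : (1:ℝ) - u ≤ 1 + u := by linarith [hu.1]
  obtain ⟨d, rfl⟩ := Nat.exists_eq_add_of_le h
  have hb : b = b' + d := by omega
  subst hb
  calc (1+u)^a * ((1-u)^(b'+d))
      = ((1+u)^a * (1-u)^b') * (1-u)^d := by ring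
    _ ≤ ((1+u)^a * (1-u)^b') * (1+u)^d := by
        apply mul_le_mul_of_nonneg_left (pow_le_pow_left₀ h2 h12 d) (by positivity)
    _ = (1+u)^(a+d) * (1-u)^b' := by ring

lemma prod_chi (n : ℕ) (z : Fin n → Bool) (i : Fin n) (ρ : ℝ) :
    ∏ k ∈ Finset.univ.erase i, (1 + ρ * chi (z k)) =
      (1+ρ) ^ #((Finset.univ.erase i).filter (fun k => z k)) *
      (1-ρ) ^ #((Finset.univ.erase i).filter (fun k => ¬ z k)) := by
  have : ∀ k : Fin n, (1 + ρ * chi (z k)) = if z k then (1+ρ) else (1-ρ) := by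
    intro k; cases hk : z k <;> simp [chi, hk] <;> ring
  simp only [this]
  rw [Finset.prod_ite]
  simp [Finset.prod_const]

lemma abs_mel (n : ℕ) (z : Fin n → Bool) (i : Fin n) :
    |mel n i z| = (2:ℝ) ^ (-(n:ℤ)) *
      II #((Finset.univ.erase i).filter (fun k => z k))
        (n - 1 - #((Finset.univ.erase i).filter (fun k => z k))) := by
  set a := #((Finset.univ.erase i).filter (fun k => z k)) with ha
  set b := #((Finset.univ.erase i).filter (fun k => ¬ z k)) with hb
  have hab : a + b = n - 1 := by
    rw [ha, hb, Finset.card_filter_add_card_filter_not, Finset.card_erase_of_mem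
      (Finset.mem_univ i), Finset.card_univ, Fintype.card_fin]
  have hba : b = n - 1 - a := by omega
  have : mel n i z = (2:ℝ) ^ (-(n:ℤ)) * (chi (z i) * II a b) := by
    rw [mel]
    congr 1
    rw [II, ← intervalIntegral.integral_const_mul]
    apply intervalIntegral.integral_congr
    intro ρ _
    simp only [prod_chi]
    rw [ha, hb]
  rw [this, hba] at *
  rw [abs_mul, abs_mul, abs_of_nonneg (by positivity : (0:ℝ) ≤ (2:ℝ) ^ (-(n:ℤ))),
    abs_of_nonneg (II_nonneg _ _)]
  have : |chi (z i)| = 1 := by cases h : z i <;> simp [chi, h]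
  rw [this, one_mul]

lemma sup_abs_mel (n : ℕ) (hn : 1 ≤ n) (z : Fin n → Bool) :
    (⨆ i : Fin n, |mel n i z|) = (2:ℝ) ^ (-(n:ℤ)) *
      II (min #(Finset.univ.filter (fun k => z k)) (n-1))
        (n - 1 - min #(Finset.univ.filter (fun k => z k)) (n-1)) := by
  haveI : Nonempty (Fin n) := ⟨⟨0, by omega⟩⟩
  set s := #(Finset.univ.filter (fun k : Fin n => z k)) with hs
  set m := min s (n-1) with hm
  have key : ∀ i : Fin n, #((Finset.univ.erase i).filter (fun k => z k)) ≤ m := by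
    intro i
    apply le_min
    · exact Finset.card_le_card (Finset.filter_subset_filter _ (Finset.erase_subset i _))
    · calc #((Finset.univ.erase i).filter (fun k => z k)) ≤ #(Finset.univ.erase i) :=
            Finset.card_le_card (Finset.filter_subset _ _)
        _ = n - 1 := by
            rw [Finset.card_erase_of_mem (Finset.mem_univ i), Finset.card_univ, Fintype.card_fin]
  have hexists : ∃ i : Fin n, #((Finset.univ.erase i).filter (fun k => z k)) = m := by
    by_cases hall : ∀ k, z k = true
    · refine ⟨⟨0, by omega⟩, ?_⟩
      have : (Finset.univ.erase (⟨0, by omega⟩ : Fin n)).filter (fun k => z k)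
          = Finset.univ.erase ⟨0, by omega⟩ := Finset.filter_true_of_mem (fun x _ => hall x)
      have hsn : s = n := by rw [hs]; rw [Finset.filter_true_of_mem (fun x _ => hall x)]; simp
      rw [this, Finset.card_erase_of_mem (Finset.mem_univ _), Finset.card_univ, Fintype.card_fin,
        hm, hsn]
      omega
    · push_neg at hall
      obtain ⟨i, hi⟩ := hall
      have hnotmem : i ∉ Finset.univ.filter (fun k : Fin n => z k) := by simp [hi]
      refine ⟨i, ?_⟩
      have h1 : (Finset.univ.erase i).filter (fun k => z k)
          = (Finset.univ.filter (fun k : Fin n => z k)).erase i := Finset.filter_erase _ _ _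
      have h2 : (Finset.univ.filter (fun k : Fin n => z k)).erase i
          = Finset.univ.filter (fun k : Fin n => z k) := Finset.erase_eq_of_notMem hnotmem
      have hsle : s ≤ n - 1 := by
        have := Finset.card_le_card (fun x hx => Finset.mem_erase.mpr
          ⟨fun he => hnotmem (he ▸ hx), Finset.mem_univ x⟩ :
          Finset.univ.filter (fun k : Fin n => z k) ⊆ Finset.univ.erase i)
        rw [Finset.card_erase_of_mem (Finset.mem_univ i), Finset.card_univ, Fintype.card_fin]
          at this
        exact this
      rw [h1, h2, ← hs, hm]
      omega
  obtain ⟨i₀, hi₀⟩ := hexists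
  apply le_antisymm
  · apply ciSup_le
    intro i
    rw [abs_mel]
    have h2pos : (0:ℝ) ≤ (2:ℝ) ^ (-(n:ℤ)) := by positivity
    apply mul_le_mul_of_nonneg_left _ h2pos
    apply II_mono (key i)
    have := key i
    omega
  · have := abs_mel n z i₀
    rw [hi₀] at this
    rw [← this]
    exact le_ciSup (Set.Finite.bddAbove (Set.finite_range fun i => |mel n i z|)) i₀

lemma sum_by_count (n : ℕ) (G : ℕ → ℝ) :
    (∑ z : Fin n → Bool, G #(Finset.univ.filter (fun k => z k))) =
      ∑ m ∈ Finset.range (n+1), (n.choose m : ℝ) * G m := by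
  classical
  let e : Finset (Fin n) ≃ (Fin n → Bool) :=
    { toFun := fun A k => k ∈ A
      invFun := fun z => Finset.univ.filter (fun k => z k)
      left_inv := fun A => by simp
      right_inv := fun z => by funext k; simp }
  rw [← Equiv.sum_comp e (fun z => G #(Finset.univ.filter (fun k => z k)))]
  have h1 : ∀ A : Finset (Fin n),
      G #(Finset.univ.filter (fun k => e A k)) = G #A := by
    intro A; congr 1; simp [e]
  simp only [h1]
  rw [← Finset.powerset_univ, Finset.powerset_card_disjiUnion]
  erw [Finset.sum_disjiUnion]
  apply Finset.sum_congr
  · simp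
  · intro m _
    have h2 : ∑ A ∈ Finset.powersetCard m (Finset.univ : Finset (Fin n)),
        G #A = ∑ _A ∈ Finset.powersetCard m (Finset.univ : Finset (Fin n)), G m :=
      Finset.sum_congr rfl (fun A hA => by rw [(Finset.mem_powersetCard.mp hA).2])
    rw [h2, Finset.sum_const, Finset.card_powersetCard, Finset.card_univ, Fintype.card_fin,
      nsmul_eq_mul]

lemma key_identity (n : ℕ) (ρ : ℝ) (hρ : ρ ≠ 1) :
    ∑ m ∈ Finset.range n, (n.choose m : ℝ) * ((1+ρ)^m * (1-ρ)^(n-1-m)) =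
    ∑ j ∈ Finset.range n, (2:ℝ)^(n-1-j) * (1+ρ)^j := by
  have hne : (1:ℝ) - ρ ≠ 0 := sub_ne_zero.mpr (Ne.symm hρ)
  apply mul_left_cancel₀ hne
  rw [Finset.mul_sum, Finset.mul_sum]
  have hL : ∀ m ∈ Finset.range n, (1-ρ) * ((n.choose m : ℝ) * ((1+ρ)^m * (1-ρ)^(n-1-m)))
      = (1+ρ)^m * (1-ρ)^(n-m) * (n.choose m : ℝ) := by
    intro m hm
    rw [Finset.mem_range] at hm
    have h : (n - 1 - m) + 1 = n - m := by omega
    rw [← h, pow_succ]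
    ring
  rw [Finset.sum_congr rfl hL]
  have hbin := add_pow (1+ρ) (1-ρ) n
  rw [Finset.sum_range_succ] at hbin
  have hR : ∀ j ∈ Finset.range n, (1-ρ) * ((2:ℝ)^(n-1-j) * (1+ρ)^j)
      = ((fun j => (2:ℝ)^(n-j) * (1+ρ)^j) j - (fun j => (2:ℝ)^(n-j) * (1+ρ)^j) (j+1)) := by
    intro j hj
    rw [Finset.mem_range] at hj
    simp only
    have h1 : n - j = (n-1-j) + 1 := by omega
    have h2 : n - (j+1) = n-1-j := by omega
    rw [h1, h2, pow_succ, pow_succ]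
    ring
  rw [Finset.sum_congr rfl hR, Finset.sum_range_sub' (fun j => (2:ℝ)^(n-j) * (1+ρ)^j)]
  have h3 : (1+ρ) + (1-ρ) = (2:ℝ) := by ring
  rw [h3] at hbin
  simp only [Nat.sub_zero, pow_zero, mul_one, Nat.sub_self, Nat.choose_self, Nat.cast_one,
    one_mul] at hbin ⊢
  linarith

lemma II_pow_zero (j : ℕ) : II j 0 = ((2:ℝ)^(j+1) - 1)/(j+1) := by
  rw [II]
  simp only [pow_zero, mul_one]
  have h := intervalIntegral.integral_comp_add_left (a := (0:ℝ)) (b := 1) (fun x => x^j) 1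
  norm_num at h
  rw [h]

lemma ae_ne_one : ∀ᵐ ρ : ℝ, ρ ≠ 1 := by
  rw [MeasureTheory.ae_iff]
  have h : {a : ℝ | ¬ a ≠ 1} = {(1:ℝ)} := by ext x; simp
  rw [h]
  exact Real.volume_singleton

lemma sum_II (n : ℕ) :
    ∑ m ∈ Finset.range n, (n.choose m : ℝ) * II m (n-1-m) =
    ∑ j ∈ Finset.range n, (2:ℝ)^(n-1-j) * (((2:ℝ)^(j+1) - 1)/(j+1)) := by
  have h1 : ∀ m, (n.choose m : ℝ) * II m (n-1-m)
      = ∫ ρ in (0:ℝ)..1, (n.choose m : ℝ) * ((1+ρ)^m * (1-ρ)^(n-1-m)) := by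
    intro m; rw [II, ← intervalIntegral.integral_const_mul]
  have h2 : ∀ j, (2:ℝ)^(n-1-j) * (((2:ℝ)^(j+1)-1)/(j+1))
      = ∫ ρ in (0:ℝ)..1, (2:ℝ)^(n-1-j) * ((1+ρ)^j * (1-ρ)^0) := by
    intro j
    rw [intervalIntegral.integral_const_mul]
    have := II_pow_zero j
    rw [II] at this
    rw [this]
  simp only [h1, h2]
  rw [← intervalIntegral.integral_finset_sum, ← intervalIntegral.integral_finset_sum]
  · apply intervalIntegral.integral_congr_ae
    filter_upwards [ae_ne_one] with ρ hρ _
    simp only [pow_zero, mul_one]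
    exact key_identity n ρ hρ
  · intro j _
    exact (Continuous.intervalIntegrable (by fun_prop) 0 1)
  · intro m _
    exact (Continuous.intervalIntegrable (by fun_prop) 0 1)

lemma aux_pow (a : ℕ) : (2:ℝ)^(-(a:ℤ)) * ((2:ℝ)^a - 1) = 1 - (2:ℝ)^(-(a:ℤ)) := by
  rw [mul_sub, mul_one, ← zpow_natCast (2:ℝ) a, ← zpow_add₀ (by norm_num : (2:ℝ) ≠ 0)]
  simp

lemma aux_pow2 {n j : ℕ} (h : j < n) :
    (2:ℝ)^(-(n:ℤ)) * (2:ℝ)^((n-1-j : ℕ)) = (2:ℝ)^(-((j+1 : ℕ):ℤ)) := by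
  rw [← zpow_natCast (2:ℝ) (n-1-j), ← zpow_add₀ (by norm_num : (2:ℝ) ≠ 0)]
  congr 1
  omega

lemma total_formula (n : ℕ) (hn : 1 ≤ n) :
    (∑ z : Fin n → Bool, ⨆ i : Fin n, |mel n i z|) =
    ∑ j ∈ Finset.range n, (1 - (2:ℝ)^(-((j+1:ℕ):ℤ)))/((j:ℝ)+1) + (1 - (2:ℝ)^(-(n:ℤ)))/n := by
  have step1 : (∑ z : Fin n → Bool, ⨆ i : Fin n, |mel n i z|)
      = ∑ z : Fin n → Bool,
        (2:ℝ)^(-(n:ℤ)) * II (min #(Finset.univ.filter (fun k => z k)) (n-1))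
          (n - 1 - min #(Finset.univ.filter (fun k => z k)) (n-1)) :=
    Finset.sum_congr rfl (fun z _ => sup_abs_mel n hn z)
  rw [step1, sum_by_count n (fun m => (2:ℝ)^(-(n:ℤ)) * II (min m (n-1)) (n - 1 - min m (n-1))),
    Finset.sum_range_succ]
  have hminn : min n (n-1) = n-1 := by omega
  have hlast : (n.choose n : ℝ) * ((2:ℝ)^(-(n:ℤ)) * II (min n (n-1)) (n - 1 - min n (n-1)))
      = (1 - (2:ℝ)^(-(n:ℤ)))/n := by
    rw [hminn, Nat.choose_self, Nat.sub_self, Nat.cast_one, one_mul, II_pow_zero,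
      show (n-1)+1 = n from by omega]
    rw [mul_div_assoc']  -- 2^{-n} * ((2^n -1)) / ?
    rw [aux_pow]
    congr 1
    push_cast [Nat.cast_sub hn]
    ring
  rw [hlast]
  congr 1
  have hmin : ∀ m ∈ Finset.range n, (n.choose m : ℝ) *
      ((2:ℝ)^(-(n:ℤ)) * II (min m (n-1)) (n - 1 - min m (n-1)))
      = (2:ℝ)^(-(n:ℤ)) * ((n.choose m : ℝ) * II m (n-1-m)) := by
    intro m hm
    rw [Finset.mem_range] at hm
    rw [min_eq_left (by omega)]
    ring
  rw [Finset.sum_congr rfl hmin, ← Finset.mul_sum, sum_II, Finset.mul_sum]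
  apply Finset.sum_congr rfl
  intro j hj
  rw [Finset.mem_range] at hj
  rw [← mul_assoc, aux_pow2 hj, mul_div_assoc', aux_pow]

lemma final_bound (n : ℕ) (hn : 2 ≤ n) :
    |(∑ j ∈ Finset.range n, (1 - (2:ℝ)^(-((j+1:ℕ):ℤ)))/((j:ℝ)+1)
      + (1 - (2:ℝ)^(-(n:ℤ)))/n) - Real.log n| ≤ 3 := by
  set H : ℝ := ∑ j ∈ Finset.range n, 1/((j:ℝ)+1) with hHdef
  set E : ℝ := ∑ j ∈ Finset.range n, (2:ℝ)^(-((j+1:ℕ):ℤ))/((j:ℝ)+1) with hEdef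
  set r : ℝ := (1 - (2:ℝ)^(-(n:ℤ)))/n with hrdef
  have hsplit : ∑ j ∈ Finset.range n, (1 - (2:ℝ)^(-((j+1:ℕ):ℤ)))/((j:ℝ)+1) = H - E := by
    rw [hHdef, hEdef, ← Finset.sum_sub_distrib]
    apply Finset.sum_congr rfl
    intro j _
    ring
  rw [hsplit]
  have hH : H = (harmonic n : ℝ) := by
    rw [harmonic]
    push_cast
    apply Finset.sum_congr rfl
    intro j _
    rw [one_div]
  have hlog1 : Real.log n ≤ H := by
    rw [hH]
    refine le_trans ?_ (log_add_one_le_harmonic n)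
    apply Real.log_le_log (by positivity)
    push_cast
    linarith
  have hlog2 : H ≤ 1 + Real.log n := by rw [hH]; exact harmonic_le_one_add_log n
  have hE1 : 0 ≤ E := by
    apply Finset.sum_nonneg
    intro j _
    positivity
  have hE2 : E ≤ 1 := by
    have step : ∀ j ∈ Finset.range n,
        (2:ℝ)^(-((j+1:ℕ):ℤ))/((j:ℝ)+1) ≤ (1/2:ℝ)^(j+1) := by
      intro j _
      have h1 : (2:ℝ)^(-((j+1:ℕ):ℤ)) = (1/2:ℝ)^(j+1) := by
        rw [zpow_neg, zpow_natCast, one_div, inv_pow]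
      rw [h1]
      have hj0 : (0:ℝ) ≤ (j:ℝ) := Nat.cast_nonneg j
      have hj1 : (1:ℝ) ≤ (j:ℝ)+1 := by linarith
      have hp : (0:ℝ) < (1/2:ℝ)^(j+1) := by positivity
      calc (1/2:ℝ)^(j+1)/((j:ℝ)+1) ≤ (1/2:ℝ)^(j+1)/1 := by
            apply div_le_div_of_nonneg_left (le_of_lt hp) (by norm_num) hj1
        _ = (1/2:ℝ)^(j+1) := by norm_num
    calc E ≤ ∑ j ∈ Finset.range n, (1/2:ℝ)^(j+1) := Finset.sum_le_sum step
      _ = (1/2) * ∑ j ∈ Finset.range n, (1/2:ℝ)^j := by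
          rw [Finset.mul_sum]; apply Finset.sum_congr rfl; intro j _; rw [pow_succ]; ring
      _ ≤ (1/2) * 2 := by
          have := sum_geometric_two_le n
          linarith
      _ = 1 := by norm_num
  have h2n1 : (0:ℝ) < (2:ℝ)^(-(n:ℤ)) := by positivity
  have h2n2 : (2:ℝ)^(-(n:ℤ)) ≤ 1 := by
    apply zpow_le_one_of_nonpos₀ (by norm_num) (by omega)
  have hnR : (2:ℝ) ≤ (n:ℝ) := by exact_mod_cast hn
  have hr1 : 0 ≤ r := by
    rw [hrdef]
    apply div_nonneg (by linarith) (by linarith)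
  have hr2 : r ≤ 1 := by
    rw [hrdef, div_le_one (by linarith)]
    linarith
  rw [abs_le]
  constructor <;> linarith


end Aux

/-- `∑_{z∈{−1,1}^n} max_i |m_{i,z}| = log n + O(1)`: there is a constant `C > 0`
such that for all `n ≥ 2` one has
`|∑_z max_i |m_{i,z}| − log n| ≤ C`.  In particular, the norm of
`f ↦ ∫₀^∞ ∇P_t f dt` from `L¹` of the cube to `L¹(ℓ^∞_n)` grows like `log n`. -/
theorem kernel_l1_linfty_norm_log_growth :
    ∃ C > (0 : ℝ), ∀ n : ℕ, 2 ≤ n →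
      |(∑ z : Fin n → Bool, ⨆ i : Fin n, |mel n i z|) - Real.log n| ≤ C := by
  refine ⟨3, by norm_num, fun n hn => ?_⟩
  rw [total_formula n (by omega)]
  exact final_bound n hn
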